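/- The union of finitely many I-common certainty components of a type space is an I-common certainty component, and the intersection of finitely many I-common certainty components, if nonempty, is an I-common certainty component. -/

import Mathlib

/-- A field (algebra) of subsets of `Ω`. -/
def IsSetField {Ω : Type*} (𝒜 : Set (Set Ω)) : Prop :=
  Set.univ ∈ 𝒜 ∧ (∀ A ∈ 𝒜, Aᶜ ∈ 𝒜) ∧ ∀ A ∈ 𝒜, ∀ B ∈ 𝒜, A ∪ B ∈ 𝒜

/-- A probability charge on the field `𝒜`. -/
def IsProbCharge {Ω : Type*} (𝒜 : Set (Set Ω)) (μ : Set Ω → ℝ) : Prop :=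
  μ Set.univ = 1 ∧ (∀ A ∈ 𝒜, 0 ≤ μ A) ∧
    ∀ A ∈ 𝒜, ∀ B ∈ 𝒜, Disjoint A B → μ (A ∪ B) = μ A + μ B

/-- `S` is an `I`-common certainty component of the type space with events `𝒜` and
type functions `t`. -/
def IsCCC {Ω ι : Type*} (𝒜 : Set (Set Ω)) (t : ι → Ω → Set Ω → ℝ) (I : Set ι)
    (S : Set Ω) : Prop :=
  S.Nonempty ∧ ∃ E ∈ 𝒜, E ⊆ S ∧ ∀ ω ∈ S, ∀ i ∈ I, t i ω E = 1

section Aux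

variable {Ω : Type*} {𝒜 : Set (Set Ω)} {μ : Set Ω → ℝ}

lemma aux_inter_mem (h𝒜 : IsSetField 𝒜) {A B : Set Ω} (hA : A ∈ 𝒜) (hB : B ∈ 𝒜) :
    A ∩ B ∈ 𝒜 := by
  have := h𝒜.2.1 _ (h𝒜.2.2 _ (h𝒜.2.1 _ hA) _ (h𝒜.2.1 _ hB))
  rwa [Set.compl_union, compl_compl, compl_compl] at this

lemma aux_mono (h𝒜 : IsSetField 𝒜) (hμ : IsProbCharge 𝒜 μ) {A B : Set Ω}
    (hA : A ∈ 𝒜) (hB : B ∈ 𝒜) (hAB : A ⊆ B) : μ A ≤ μ B := by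
  have hD : B ∩ Aᶜ ∈ 𝒜 := aux_inter_mem h𝒜 hB (h𝒜.2.1 _ hA)
  have hdisj : Disjoint A (B ∩ Aᶜ) := by
    exact Set.disjoint_left.mpr fun x hx hx2 => hx2.2 hx
  have hunion : A ∪ (B ∩ Aᶜ) = B := by
    ext x; constructor
    · rintro (h | h); exact hAB h; exact h.1
    · intro h; by_cases hx : x ∈ A
      · exact Or.inl hx
      · exact Or.inr ⟨h, hx⟩
  have := hμ.2.2 _ hA _ hD hdisj
  rw [hunion] at this
  linarith [hμ.2.1 _ hD]

lemma aux_le_one (h𝒜 : IsSetField 𝒜) (hμ : IsProbCharge 𝒜 μ) {A : Set Ω}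
    (hA : A ∈ 𝒜) : μ A ≤ 1 := by
  have := aux_mono h𝒜 hμ hA h𝒜.1 (Set.subset_univ A)
  rwa [hμ.1] at this

lemma aux_inter_one (h𝒜 : IsSetField 𝒜) (hμ : IsProbCharge 𝒜 μ) {A B : Set Ω}
    (hA : A ∈ 𝒜) (hB : B ∈ 𝒜) (h1 : μ A = 1) (h2 : μ B = 1) : μ (A ∩ B) = 1 := by
  have hAB : A ∩ B ∈ 𝒜 := aux_inter_mem h𝒜 hA hB
  have hABc : A ∩ Bᶜ ∈ 𝒜 := aux_inter_mem h𝒜 hA (h𝒜.2.1 _ hB)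
  -- μ A = μ (A ∩ Bᶜ) + μ (A ∩ B)
  have e1 : μ A = μ (A ∩ Bᶜ) + μ (A ∩ B) := by
    have hdisj : Disjoint (A ∩ Bᶜ) (A ∩ B) :=
      Set.disjoint_left.mpr fun x hx hx2 => hx.2 hx2.2
    have hu : (A ∩ Bᶜ) ∪ (A ∩ B) = A := by
      ext x; constructor
      · rintro (h | h); exacts [h.1, h.1]
      · intro h; by_cases hx : x ∈ B
        · exact Or.inr ⟨h, hx⟩
        · exact Or.inl ⟨h, hx⟩
    have := hμ.2.2 _ hABc _ hAB hdisj
    rw [hu] at this; linarith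
  -- μ (A ∪ B) = μ (A ∩ Bᶜ) + μ B
  have e2 : μ ((A ∩ Bᶜ) ∪ B) = μ (A ∩ Bᶜ) + μ B := by
    exact hμ.2.2 _ hABc _ hB (Set.disjoint_left.mpr fun x hx hx2 => hx.2 hx2)
  have hmem : (A ∩ Bᶜ) ∪ B ∈ 𝒜 := h𝒜.2.2 _ hABc _ hB
  have hle := aux_le_one h𝒜 hμ hmem
  have h0 := hμ.2.1 _ hABc
  rw [e2, h2] at hle
  linarith

end Aux

/-- the union of finitely many `I`-common certainty components is an
`I`-common certainty component, and so is a nonempty intersection of finitely many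
`I`-common certainty components. -/
theorem stmt_5 {Ω ι κ : Type*} (𝒜 : Set (Set Ω)) (h𝒜 : IsSetField 𝒜)
    (M : ι → Set (Set Ω)) (hM : ∀ i, IsSetField (M i)) (hM𝒜 : ∀ i, M i ⊆ 𝒜)
    (t : ι → Ω → Set Ω → ℝ) (ht : ∀ i ω, IsProbCharge 𝒜 (t i ω))
    (htk : ∀ i ω, ∀ E ∈ M i, ω ∈ E → t i ω E = 1)
    (I : Set ι) (s : Finset κ) (hs : s.Nonempty)
    (S : κ → Set Ω) (hS : ∀ k ∈ s, IsCCC 𝒜 t I (S k)) :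
    IsCCC 𝒜 t I (⋃ k ∈ s, S k) ∧
    ((⋂ k ∈ s, S k).Nonempty → IsCCC 𝒜 t I (⋂ k ∈ s, S k)) := by
  classical
  have hchoice : ∀ k, ∃ E, E ∈ 𝒜 ∧ (k ∈ s →
      (E ⊆ S k ∧ ∀ ω ∈ S k, ∀ i ∈ I, t i ω E = 1)) := by
    intro k
    by_cases hk : k ∈ s
    · obtain ⟨-, E, hE𝒜, hEsub, hEone⟩ := hS k hk
      exact ⟨E, hE𝒜, fun _ => ⟨hEsub, hEone⟩⟩
    · exact ⟨Set.univ, h𝒜.1, fun h => absurd h hk⟩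
  choose E hE𝒜 hEs using hchoice
  -- membership of finite unions / intersections in the field
  have hUnionMem : ∀ u : Finset κ, (⋃ k ∈ u, E k) ∈ 𝒜 := by
    intro u
    induction u using Finset.induction_on with
    | empty =>
        simp only [Finset.notMem_empty, Set.iUnion_of_empty, Set.iUnion_empty]
        have := h𝒜.2.1 _ h𝒜.1
        simpa using this
    | @insert _ _ hk ih =>
        rw [Finset.set_biUnion_insert]
        exact h𝒜.2.2 _ (hE𝒜 _) _ ih
  have hInterMem : ∀ u : Finset κ, (⋂ k ∈ u, E k) ∈ 𝒜 := by
    intro u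
    induction u using Finset.induction_on with
    | empty => simpa using h𝒜.1
    | @insert _ _ hk ih =>
        rw [Finset.set_biInter_insert]
        exact aux_inter_mem h𝒜 (hE𝒜 _) ih
  constructor
  · -- Union
    obtain ⟨k0, hk0⟩ := hs
    obtain ⟨⟨ω0, hω0⟩, -⟩ := hS k0 hk0
    refine ⟨⟨ω0, Set.mem_biUnion hk0 hω0⟩, ⋃ k ∈ s, E k, hUnionMem s, ?_, ?_⟩
    · exact Set.iUnion₂_mono fun k hk => ((hEs k hk).1)
    · intro ω hω i hi
      obtain ⟨k, hk, hωk⟩ := Set.mem_iUnion₂.mp hω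
      have h1 : t i ω (E k) = 1 := (hEs k hk).2 ω hωk i hi
      have hsub : E k ⊆ ⋃ k ∈ s, E k := Set.subset_biUnion_of_mem hk
      have hle := aux_mono h𝒜 (ht i ω) (hE𝒜 k) (hUnionMem s) hsub
      have hle1 := aux_le_one h𝒜 (ht i ω) (hUnionMem s)
      linarith
  · -- Intersection
    intro hne
    refine ⟨hne, ⋂ k ∈ s, E k, hInterMem s, ?_, ?_⟩
    · exact Set.iInter₂_mono fun k hk => ((hEs k hk).1)
    · intro ω hω i hi
      have hωk : ∀ k ∈ s, ω ∈ S k := fun k hk => Set.mem_iInter₂.mp hω k hk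
      -- induction over subsets of s
      have key : ∀ u : Finset κ, u ⊆ s → t i ω (⋂ k ∈ u, E k) = 1 := by
        intro u
        induction u using Finset.induction_on with
        | empty =>
            intro _
            simpa using (ht i ω).1
        | @insert a u ha ih =>
            intro hus
            rw [Finset.set_biInter_insert]
            have has : a ∈ s := hus (Finset.mem_insert_self a u)
            have h1 : t i ω (E a) = 1 := (hEs a has).2 ω (hωk a has) i hi
            have h2 : t i ω (⋂ k ∈ u, E k) = 1 :=
              ih (fun x hx => hus (Finset.mem_insert_of_mem hx))
            exact aux_inter_one h𝒜 (ht i ω) (hE𝒜 a) (hInterMem u) h1 h2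
      exact key s (le_refl s)
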